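/- arXiv:1801.05910 — 10 statements merged into one kernel-verified Lean document; each statement's English description precedes it below -/
import Mathlib

section
/- For all n ≥ 0, 3·J³ₙ + j³ₙ = 2^(n+1), where J³ₙ and j³ₙ are the third-order Jacobsthal and Jacobsthal-Lucas numbers. -/
def J3 : ℕ → ℤ
  | 0 => 0
  | 1 => 1
  | 2 => 1
  | n + 3 => J3 (n + 2) + J3 (n + 1) + 2 * J3 n

def j3 : ℕ → ℤ
  | 0 => 2
  | 1 => 1
  | 2 => 5
  | n + 3 => j3 (n + 2) + j3 (n + 1) + 2 * j3 n

def V3 (n : ℕ) : ℤ := if n % 3 = 0 then 2 else if n % 3 = 1 then -3 else 1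

theorem stmt_0 : ∀ n : ℕ, 3 * J3 n + j3 n = 2 ^ (n + 1) := by
  intro n
  induction n using Nat.strong_induction_on with
  | _ n ih =>
    match n with
    | 0 => decide
    | 1 => decide
    | 2 => decide
    | m + 3 =>
      have h0 := ih m (by omega)
      have h1 := ih (m + 1) (by omega)
      have h2 := ih (m + 2) (by omega)
      simp only [J3, j3]
      ring_nf
      ring_nf at h0 h1 h2
      linear_combination h2 + h1 + 2 * h0
end

section
/- For all n ≥ 3, j³ₙ − 3·J³ₙ = 2·j³ₙ₋₃, where J³ₙ and j³ₙ are the third-order Jacobsthal and Jacobsthal-Lucas numbers. -/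
lemma aux : ∀ n : ℕ, (j3 (n+3) - 3 * J3 (n+3) = 2 * j3 n) ∧
    (j3 (n+4) - 3 * J3 (n+4) = 2 * j3 (n+1)) ∧
    (j3 (n+5) - 3 * J3 (n+5) = 2 * j3 (n+2)) := by
  intro n
  induction n with
  | zero => refine ⟨by norm_num [J3, j3], by norm_num [J3, j3], by norm_num [J3, j3]⟩
  | succ k ih =>
    obtain ⟨h1, h2, h3⟩ := ih
    refine ⟨h2, h3, ?_⟩
    show j3 (k+3+3) - 3 * J3 (k+3+3) = 2 * j3 (k+3)
    rw [show k+3+3 = (k+3)+3 from rfl, J3, j3]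
    simp only [show k+3+2 = k+5 from rfl, show k+3+1 = k+4 from rfl]
    have hr : j3 (k+3) = j3 (k+2) + j3 (k+1) + 2 * j3 k := rfl
    linarith

theorem stmt_1 : ∀ n : ℕ, 3 ≤ n → j3 n - 3 * J3 n = 2 * j3 (n - 3) := by
  intro n hn
  obtain ⟨m, rfl⟩ := Nat.exists_eq_add_of_le hn
  rw [show 3 + m = m + 3 by ring, Nat.add_sub_cancel]
  exact (aux m).1
end

section
/- For all n ≥ 0, J³ₙ₊₂ − 4·J³ₙ equals −2 if n ≡ 1 (mod 3), and equals 1 otherwise. -/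
theorem stmt_2 : ∀ n : ℕ, J3 (n + 2) - 4 * J3 n = if n % 3 = 1 then -2 else 1 := by
  have key : ∀ n : ℕ,
      (J3 (n + 2) - 4 * J3 n = if n % 3 = 1 then -2 else 1) ∧
      (J3 (n + 3) - 4 * J3 (n + 1) = if (n + 1) % 3 = 1 then -2 else 1) ∧
      (J3 (n + 4) - 4 * J3 (n + 2) = if (n + 2) % 3 = 1 then -2 else 1) := by
    intro n
    induction n with
    | zero => simp [J3]
    | succ m ih =>
      obtain ⟨h0, h1, h2⟩ := ih
      refine ⟨h1, h2, ?_⟩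
      have e : J3 (m + 5) = J3 (m + 4) + J3 (m + 3) + 2 * J3 (m + 2) := rfl
      have e2 : J3 (m + 3) = J3 (m + 2) + J3 (m + 1) + 2 * J3 m := rfl
      show J3 (m + 5) - 4 * J3 (m + 3) = _
      rw [e, e2]
      have : m % 3 = 0 ∨ m % 3 = 1 ∨ m % 3 = 2 := by omega
      rcases this with h | h | h <;>
        simp only [h, show (m+1)%3 = (m%3+1)%3 from by omega,
          show (m+2)%3 = (m%3+2)%3 from by omega,
          show (m+3)%3 = m%3 from by omega] at h0 h1 h2 ⊢ <;>
        norm_num at h0 h1 h2 ⊢ <;> linarith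
  exact fun n => (key n).1
end

section
/- For all n ≥ 0, j³ₙ − 4·J³ₙ equals 2 if n ≡ 0 (mod 3), equals −3 if n ≡ 1 (mod 3), and equals 1 if n ≡ 2 (mod 3). -/
def P (n : ℕ) : Prop :=
    j3 n - 4 * J3 n = if n % 3 = 0 then 2 else if n % 3 = 1 then -3 else 1

lemma key : ∀ n : ℕ, P n ∧ P (n + 1) ∧ P (n + 2) := by
  intro n
  induction n with
  | zero => refine ⟨?_, ?_, ?_⟩ <;> simp [P, J3, j3]
  | succ k ih =>
    obtain ⟨h0, h1, h2⟩ := ih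
    refine ⟨h1, h2, ?_⟩
    unfold P at *
    have hm : (k + 3) % 3 = k % 3 := by omega
    simp only [J3, j3, hm]
    have hm1 : (k + 1) % 3 = (k % 3 + 1) % 3 := by omega
    have hm2 : (k + 2) % 3 = (k % 3 + 2) % 3 := by omega
    rw [hm1] at h1; rw [hm2] at h2
    have hb : k % 3 < 3 := Nat.mod_lt _ (by norm_num)
    interval_cases h : k % 3 <;> simp_all <;> linarith

theorem stmt_3 : ∀ n : ℕ,
    j3 n - 4 * J3 n = if n % 3 = 0 then 2 else if n % 3 = 1 then -3 else 1 :=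
  fun n => (key n).1
end

section
/- For all n ≥ 0, j³ₙ₊₁ + j³ₙ = 3·J³ₙ₊₂, where J³ₙ and j³ₙ are the third-order Jacobsthal and Jacobsthal-Lucas numbers. -/
theorem stmt_4 : ∀ n : ℕ, j3 (n + 1) + j3 n = 3 * J3 (n + 2) := by
  intro n
  induction n using Nat.strong_induction_on with
  | _ n ih =>
    match n with
    | 0 => decide
    | 1 => decide
    | 2 => decide
    | m + 3 =>
      have h0 := ih m (by omega)
      have h1 := ih (m + 1) (by omega)
      have h2 := ih (m + 2) (by omega)
      simp only [show m+3+1 = m+1+3 from rfl, show m+2+1=m+3 from rfl,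
        show m+3+2 = m+2+3 from rfl, J3, j3] at *
      linarith
end

section
/- For all n ≥ 0, j³ₙ − J³ₙ₊₂ equals 1 if n ≡ 0 (mod 3), equals −1 if n ≡ 1 (mod 3), and equals 0 if n ≡ 2 (mod 3). -/
theorem stmt_5 : ∀ n : ℕ,
    j3 n - J3 (n + 2) = if n % 3 = 0 then 1 else if n % 3 = 1 then -1 else 0 := by
  have key : ∀ n : ℕ,
      (j3 n - J3 (n + 2) = if n % 3 = 0 then 1 else if n % 3 = 1 then -1 else 0) ∧
      (j3 (n+1) - J3 (n + 3) = if (n+1) % 3 = 0 then 1 else if (n+1) % 3 = 1 then -1 else 0) ∧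
      (j3 (n+2) - J3 (n + 4) = if (n+2) % 3 = 0 then 1 else if (n+2) % 3 = 1 then -1 else 0) := by
    intro n
    induction n with
    | zero => norm_num [J3, j3]
    | succ k ih =>
      obtain ⟨h0, h1, h2⟩ := ih
      refine ⟨h1, h2, ?_⟩
      have e1 : j3 (k+3) = j3 (k+2) + j3 (k+1) + 2 * j3 k := rfl
      have e2 : J3 (k+5) = J3 (k+4) + J3 (k+3) + 2 * J3 (k+2) := rfl
      have hk := Nat.mod_lt k (show 0 < 3 by norm_num)
      interval_cases h : k % 3 <;>
        simp_all [Nat.add_mod, h] <;> omega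
  exact fun n => (key n).1
end

section
/- For all n ≥ 3, (j³ₙ₋₃)² + 3·J³ₙ·j³ₙ = 4ⁿ, where J³ₙ and j³ₙ are the third-order Jacobsthal and Jacobsthal-Lucas numbers. -/
lemma V3_add3 (n : ℕ) : V3 (n + 3) = V3 n := by
  simp [V3, Nat.add_mod]

lemma key_s6 : ∀ n : ℕ, 7 * J3 n = 2 ^ (n + 1) - V3 n ∧ 7 * j3 n = 2 ^ (n + 3) + 3 * V3 n := by
  intro n
  induction n using Nat.strong_induction_on with
  | _ n ih =>
    match n with
    | 0 => norm_num [J3, j3, V3]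
    | 1 => norm_num [J3, j3, V3]
    | 2 => norm_num [J3, j3, V3]
    | m + 3 =>
      have h0 := ih m (by omega)
      have h1 := ih (m + 1) (by omega)
      have h2 := ih (m + 2) (by omega)
      have p1 : (2 : ℤ) ^ (m + 4) = 2 * 2 ^ (m + 3) := by ring
      have p2 : (2 : ℤ) ^ (m + 3) = 2 * 2 ^ (m + 2) := by ring
      have p3 : (2 : ℤ) ^ (m + 2) = 2 * 2 ^ (m + 1) := by ring
      have p4 : (2 : ℤ) ^ (m + 6) = 2 * 2 ^ (m + 5) := by ring
      have p5 : (2 : ℤ) ^ (m + 5) = 2 * 2 ^ (m + 4) := by ring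
      have hv1 : V3 (m + 1) = -V3 m - V3 (m + 2) := by
        have := V3_add3 m
        simp only [V3] at *
        omega
      rw [show J3 (m + 3) = J3 (m + 2) + J3 (m + 1) + 2 * J3 m from rfl,
        show j3 (m + 3) = j3 (m + 2) + j3 (m + 1) + 2 * j3 m from rfl, V3_add3]
      constructor <;> linarith [h0.1, h0.2, h1.1, h1.2, h2.1, h2.2]

theorem stmt_6 : ∀ n : ℕ, 3 ≤ n → (j3 (n - 3)) ^ 2 + 3 * J3 n * j3 n = 4 ^ n := by
  intro n hn
  obtain ⟨m, rfl⟩ : ∃ m, n = m + 3 := ⟨n - 3, by omega⟩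
  simp only [Nat.add_sub_cancel]
  obtain ⟨hJ, hj0⟩ := key_s6 m
  obtain ⟨hJ3, hj3⟩ := key_s6 (m + 3)
  rw [V3_add3] at hJ3 hj3
  have h4 : (4 : ℤ) ^ (m + 3) = 2 ^ (m + 3) * 2 ^ (m + 3) := by
    rw [show (4 : ℤ) = 2 * 2 by norm_num, mul_pow]
  have p1 : (2 : ℤ) ^ (m + 4) = 2 * 2 ^ (m + 3) := by ring
  have p2 : (2 : ℤ) ^ (m + 6) = 8 * 2 ^ (m + 3) := by ring
  have e : 49 * ((j3 m) ^ 2 + 3 * J3 (m + 3) * j3 (m + 3)) =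
      (7 * j3 m) ^ 2 + 3 * (7 * J3 (m + 3)) * (7 * j3 (m + 3)) := by ring
  have : 49 * ((j3 m) ^ 2 + 3 * J3 (m + 3) * j3 (m + 3)) = 49 * 4 ^ (m + 3) := by
    rw [e, hj0, hJ3, hj3, h4, p1, p2]; ring
  linarith
end

section
/- For all n ≥ 0, the sum ∑_{k=0}^{n} J³ₖ equals J³ₙ₊₁ if n is not divisible by 3, and equals J³ₙ₊₁ − 1 if n is divisible by 3. -/
theorem stmt_7 : ∀ n : ℕ,
    ∑ k ∈ Finset.range (n + 1), J3 k = if 3 ∣ n then J3 (n + 1) - 1 else J3 (n + 1) := by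
  intro n
  induction n using Nat.strong_induction_on with
  | _ n ih =>
    match n with
    | 0 => simp [J3]
    | 1 => norm_num [Finset.sum_range_succ, J3]
    | 2 => norm_num [Finset.sum_range_succ, J3]
    | n + 3 =>
      have h := ih n (by omega)
      have hd : (3 ∣ n + 3) ↔ 3 ∣ n := by omega
      have hJ : J3 (n + 4) = J3 (n + 3) + J3 (n + 2) + 2 * J3 (n + 1) := rfl
      rw [show n + 3 + 1 = n + 4 from rfl, Finset.sum_range_succ, Finset.sum_range_succ,
        Finset.sum_range_succ]
      by_cases h3 : 3 ∣ n <;> simp [hd, h3] at h ⊢ <;> rw [h] <;> linarith [hJ]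
end

section
/- For all n ≥ 0, 7·J³ₙ = 2^(n+1) − Vₙ, where Vₙ is the 3-periodic sequence with Vₙ = 2 if n ≡ 0 (mod 3), Vₙ = −3 if n ≡ 1 (mod 3), and Vₙ = 1 if n ≡ 2 (mod 3). -/
theorem stmt_9 : ∀ n : ℕ, 7 * J3 n = 2 ^ (n + 1) - V3 n := by
  intro n
  induction n using Nat.strong_induction_on with
  | _ n ih =>
    match n with
    | 0 => simp [J3, V3]
    | 1 => norm_num [J3, V3]
    | 2 => norm_num [J3, V3]
    | n + 3 =>
      have h0 := ih n (by omega)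
      have h1 := ih (n + 1) (by omega)
      have h2 := ih (n + 2) (by omega)
      have hp1 : (2:ℤ) ^ (n + 1 + 1) = 2 * 2 ^ (n + 1) := by ring
      have hp2 : (2:ℤ) ^ (n + 2 + 1) = 4 * 2 ^ (n + 1) := by ring
      have hp3 : (2:ℤ) ^ (n + 3 + 1) = 8 * 2 ^ (n + 1) := by ring
      rw [J3, hp3]
      rw [hp1] at h1; rw [hp2] at h2
      have hm : n % 3 = 0 ∨ n % 3 = 1 ∨ n % 3 = 2 := by omega
      rcases hm with h | h | h
      · have e1 : (n + 1) % 3 = 1 := by omega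
        have e2 : (n + 2) % 3 = 2 := by omega
        have e3 : (n + 3) % 3 = 0 := by omega
        simp only [V3, h, e1, e2, e3] at h0 h1 h2 ⊢
        norm_num at h0 h1 h2 ⊢
        linarith
      · have e1 : (n + 1) % 3 = 2 := by omega
        have e2 : (n + 2) % 3 = 0 := by omega
        have e3 : (n + 3) % 3 = 1 := by omega
        simp only [V3, h, e1, e2, e3] at h0 h1 h2 ⊢
        norm_num at h0 h1 h2 ⊢
        linarith
      · have e1 : (n + 1) % 3 = 0 := by omega
        have e2 : (n + 2) % 3 = 1 := by omega
        have e3 : (n + 3) % 3 = 2 := by omega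
        simp only [V3, h, e1, e2, e3] at h0 h1 h2 ⊢
        norm_num at h0 h1 h2 ⊢
        linarith
end

section
/- For all n ≥ 0, 7·j³ₙ = 2^(n+3) + 3·Vₙ, where Vₙ is the 3-periodic sequence with Vₙ = 2 if n ≡ 0 (mod 3), Vₙ = −3 if n ≡ 1 (mod 3), and Vₙ = 1 if n ≡ 2 (mod 3). -/
theorem stmt_10 : ∀ n : ℕ, 7 * j3 n = 2 ^ (n + 3) + 3 * V3 n := by
  intro n
  induction n using Nat.strong_induction_on with
  | _ n ih =>
    match n with
    | 0 => decide
    | 1 => decide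
    | 2 => decide
    | (m+3) =>
      have h0 := ih m (by omega)
      have h1 := ih (m+1) (by omega)
      have h2 := ih (m+2) (by omega)
      have e3 : (2:ℤ) ^ (m + 3 + 3) = 8 * 2 ^ (m + 3) := by ring
      have e1 : (2:ℤ) ^ (m + 1 + 3) = 2 * 2 ^ (m + 3) := by ring
      have e2 : (2:ℤ) ^ (m + 2 + 3) = 4 * 2 ^ (m + 3) := by ring
      have hm : m % 3 = 0 ∨ m % 3 = 1 ∨ m % 3 = 2 := by omega
      have k1 : (m+1)%3 = (m%3+1)%3 := by omega
      have k2 : (m+2)%3 = (m%3+2)%3 := by omega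
      have k3 : (m+3)%3 = m%3 := by omega
      rcases hm with h|h|h <;>
        simp only [j3, V3, k1, k2, k3, h, e1, e2, e3] at h0 h1 h2 ⊢ <;>
        norm_num at h0 h1 h2 ⊢ <;> omega
end
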